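/- Suppose the graph B is E₆-compatible. Then the function Q is nonconstant on each nonempty set of the form (v + U) ∖ V^Γ; that is, for every v ∈ V ∖ V^Γ there exists u ∈ U with v + u ∉ V^Γ and Q(v + u) = Q(v) + 1. -/

import Mathlib

namespace TF2

variable {V : Type*} [AddCommGroup V] [Module (ZMod 2) V]

/-- The symplectic transvection `τ_b(x) = x - Ω(x, b) b`. -/
def transv (Om : V →ₗ[ZMod 2] V →ₗ[ZMod 2] ZMod 2) (b : V) (x : V) : V :=
  x - Om x b • b

/-- The group `Γ` of transformations of `V` generated by the transvections `τ_b`, `b ∈ B`. -/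
def Gamma (Om : V →ₗ[ZMod 2] V →ₗ[ZMod 2] ZMod 2) (B : Set V) : Subgroup (Equiv.Perm V) :=
  Subgroup.closure {g | ∃ b ∈ B, ⇑g = transv Om b}

/-- The set `V^Γ` of `Γ`-invariant vectors. -/
def fixedSet (Om : V →ₗ[ZMod 2] V →ₗ[ZMod 2] ZMod 2) (B : Set V) : Set V :=
  {x | ∀ g ∈ Gamma Om B, g x = x}

/-- The parallel translate `v + U` of the span `U` of `B`. -/
def slice (B : Set V) (v : V) : Set V :=
  {x | ∃ u ∈ Submodule.span (ZMod 2) B, x = v + u}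

/-- The kernel `K` of the restriction of `Ω` to the span `U` of `B`, as a set. -/
def kerRestrict (Om : V →ₗ[ZMod 2] V →ₗ[ZMod 2] ZMod 2) (B : Set V) : Set V :=
  {k | k ∈ Submodule.span (ZMod 2) B ∧ ∀ u ∈ Submodule.span (ZMod 2) B, Om k u = 0}

/-- The graph on `B` with `b`, `b'` adjacent iff `Ω(b, b') = 1`. -/
def bGraph (Om : V →ₗ[ZMod 2] V →ₗ[ZMod 2] ZMod 2) (B : Set V) : SimpleGraph B where
  Adj b b' := b ≠ b' ∧ Om b b' = 1 ∧ Om b' b = 1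
  symm := by
    constructor
    rintro x y ⟨h1, h2, h3⟩
    exact ⟨h1.symm, h3, h2⟩
  loopless := by
    constructor
    rintro x ⟨h1, -⟩
    exact h1 rfl

/-- The Dynkin graph `E₆`: a path `0 - 1 - 2 - 3 - 4` with an extra vertex `5` attached to
the middle vertex `2`. -/
def dynkinE6 : SimpleGraph (Fin 6) :=
  SimpleGraph.fromRel fun x y =>
    (x = 0 ∧ y = 1) ∨ (x = 1 ∧ y = 2) ∨ (x = 2 ∧ y = 3) ∨ (x = 3 ∧ y = 4) ∨ (x = 2 ∧ y = 5)

/-- A graph is `E₆`-compatible if it is connected and contains an induced subgraph on six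
vertices isomorphic to the Dynkin graph `E₆`. -/
def E6Compatible {α : Type*} (G : SimpleGraph α) : Prop :=
  G.Connected ∧ ∃ f : Fin 6 → α, Function.Injective f ∧
    ∀ x y, G.Adj (f x) (f y) ↔ dynkinE6.Adj x y


variable {V : Type*} [AddCommGroup V] [Module (ZMod 2) V] [FiniteDimensional (ZMod 2) V]


instance : DecidableRel dynkinE6.Adj := fun x y => by
  unfold dynkinE6
  exact decidable_of_iff _ (SimpleGraph.fromRel_adj _ x y).symm

/-- Lemma 6.5: if the graph `B` is `E₆`-compatible then `Q` is nonconstant on each set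
`(v + U) \\ V^Γ`. -/
theorem Q_nonconstant (Om : V →ₗ[ZMod 2] V →ₗ[ZMod 2] ZMod 2)
    (hAlt : ∀ x, Om x x = 0) (B : Set V)
    (hB : LinearIndependent (ZMod 2) ((↑) : B → V))
    (hE6 : E6Compatible (bGraph Om B))
    (Q : V → ZMod 2) (hQ : ∀ x y, Q (x + y) = Q x + Q y + Om x y)
    (hQB : ∀ b ∈ B, Q b = 1)
    (v : V) (hv : v ∉ fixedSet Om B) :
    ∃ u ∈ Submodule.span (ZMod 2) B, v + u ∉ fixedSet Om B ∧ Q (v + u) = Q v + 1 := by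
  classical
  obtain ⟨hconn, f, hfinj, hfadj⟩ := hE6
  set a : Fin 6 → V := fun i => (f i : V) with ha
  have haB : ∀ i, (a i) ∈ B := fun i => (f i).2
  have haux1 : ∀ s t : ZMod 2, s ≠ t + 1 → s = t := by decide
  have haux2 : ∀ s : ZMod 2, s ≠ 0 → s = 1 := by decide
  have htwo : (2 : ZMod 2) = 0 := by decide
  have hvv : ∀ z : V, z + z = 0 := by
    intro z
    rw [← two_smul (ZMod 2) z, show (2 : ZMod 2) = 0 by decide, zero_smul]
  have hsym : ∀ x y : V, Om x y = Om y x := by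
    intro x y
    have h1 := hQ x y
    have h2 := hQ y x
    rw [add_comm y x] at h2
    linear_combination h1 - h2 + (Om x y - Om y x) * htwo
  -- membership in fixedSet forces orthogonality to all of B
  have hfix0 : ∀ x, x ∈ fixedSet Om B → ∀ b ∈ B, Om x b = 0 := by
    intro x hx b hb
    have hb0 : b ≠ 0 := hB.ne_zero ⟨b, hb⟩
    have hinv : ∀ z, transv Om b (transv Om b z) = z := by
      intro z
      have hOmv : Om (z - Om z b • b) b = Om z b := by
        simp [map_sub, map_smul, hAlt]
      show (z - Om z b • b) - Om (z - Om z b • b) b • b = z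
      rw [hOmv, sub_sub, hvv, sub_zero]
    set τ : Equiv.Perm V := ⟨transv Om b, transv Om b, hinv, hinv⟩ with hτdef
    have hτ : τ ∈ Gamma Om B := Subgroup.subset_closure ⟨b, hb, rfl⟩
    have hfx : x - Om x b • b = x := hx τ hτ
    have h0 : Om x b • b = 0 := sub_eq_self.mp hfx
    by_contra hne
    rw [haux2 _ hne, one_smul] at h0
    exact hb0 h0
  have L : ∀ x y : V, v + x ∈ fixedSet Om B → v + y ∈ fixedSet Om B →
      ∀ b ∈ B, Om (x + y) b = 0 := by
    intro x y hx hy b hb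
    have e1 := hfix0 _ hx b hb
    have e2 := hfix0 _ hy b hb
    have hxy : x + y = (v + x) + (v + y) := by
      rw [add_add_add_comm, hvv, zero_add]
    rw [hxy, map_add, LinearMap.add_apply, e1, e2, add_zero]
  -- adjacency values
  have hadj : ∀ i j, dynkinE6.Adj i j → Om (a i) (a j) = 1 := fun i j h =>
    ((hfadj i j).mpr h).2.1
  have hnadj : ∀ i j, i ≠ j → ¬ dynkinE6.Adj i j → Om (a i) (a j) = 0 := by
    intro i j hne hna
    have h1 : ¬ (bGraph Om B).Adj (f i) (f j) := fun h => hna ((hfadj i j).mp h)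
    have h2 : f i ≠ f j := fun h => hne (hfinj h)
    by_contra hOm
    exact h1 ⟨h2, haux2 _ hOm, by rw [← hsym]; exact haux2 _ hOm⟩
  have h01 : Om (a 0) (a 1) = 1 := hadj 0 1 (by decide)
  have h34 : Om (a 3) (a 4) = 1 := hadj 3 4 (by decide)
  have h10 : Om (a 1) (a 0) = 1 := by rw [hsym]; exact h01
  have h30 : Om (a 3) (a 0) = 0 := hnadj 3 0 (by decide) (by decide)
  have h31 : Om (a 3) (a 1) = 0 := hnadj 3 1 (by decide) (by decide)
  have h40 : Om (a 4) (a 0) = 0 := hnadj 4 0 (by decide) (by decide)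
  have h41 : Om (a 4) (a 1) = 0 := hnadj 4 1 (by decide) (by decide)
  by_contra hcon
  push_neg at hcon
  have H : ∀ u, u ∈ Submodule.span (ZMod 2) B → v + u ∉ fixedSet Om B →
      Q (v + u) = Q v := fun u hu hnf => haux1 _ _ (hcon u hu hnf)
  have key : ∀ u u', u ∈ Submodule.span (ZMod 2) B → u' ∈ Submodule.span (ZMod 2) B →
      v + u ∉ fixedSet Om B → v + u' ∉ fixedSet Om B → v + (u + u') ∉ fixedSet Om B →
      Om u u' = 0 := by
    intro u u' hu hu' n1 n2 n3
    have e1 := H u hu n1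
    have e2 := H u' hu' n2
    have e3 := H (u + u') (Submodule.add_mem _ hu hu') n3
    have c1 : Q (v + (u + u')) = Q (v + u) + Q u' + (Om v u' + Om u u') := by
      rw [← add_assoc, hQ (v + u) u', map_add, LinearMap.add_apply]
    have c2 : Q (v + u') = Q v + Q u' + Om v u' := hQ v u'
    rw [e3, e1] at c1
    rw [e2] at c2
    linear_combination c1 - c2 + Om u u' * htwo
  have notfix : ∀ x y (w : Fin 6), v + x ∈ fixedSet Om B → Om x (a w) = 1 →
      Om y (a w) = 0 → v + y ∉ fixedSet Om B := by
    intro x y w hx hxw hyw hy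
    have h0 := L x y hx hy (a w) (haB w)
    rw [map_add, LinearMap.add_apply, hxw, hyw, add_zero] at h0
    exact one_ne_zero h0
  have finish2 : ∀ x (w : Fin 6), v + x ∈ fixedSet Om B → Om x (a w) = 1 →
      Om (a 3) (a w) = 0 → Om (a 4) (a w) = 0 → False := by
    intro x w hx hxw h3 h4
    have hy34 : Om (a 3 + a 4) (a w) = 0 := by
      rw [map_add, LinearMap.add_apply, h3, h4, add_zero]
    have k := key (a 3) (a 4) (Submodule.subset_span (haB 3)) (Submodule.subset_span (haB 4))
      (notfix x _ w hx hxw h3) (notfix x _ w hx hxw h4) (notfix x _ w hx hxw hy34)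
    rw [h34] at k
    exact one_ne_zero k
  by_cases case1 : (v + a 0 ∈ fixedSet Om B) ∨ (v + a 1 ∈ fixedSet Om B) ∨
      (v + (a 0 + a 1) ∈ fixedSet Om B)
  · obtain hx | hx | hx := case1
    · exact finish2 (a 0) 1 hx h01 h31 h41
    · exact finish2 (a 1) 0 hx h10 h30 h40
    · refine finish2 (a 0 + a 1) 0 hx ?_ h30 h40
      rw [map_add, LinearMap.add_apply, hAlt, h10, zero_add]
  · push_neg at case1
    obtain ⟨n1, n2, n3⟩ := case1
    have k := key (a 0) (a 1) (Submodule.subset_span (haB 0)) (Submodule.subset_span (haB 1))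
      n1 n2 n3
    rw [h01] at k
    exact one_ne_zero k

end TF2
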